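/- Let (G, v₀) be a well-posed instance on a finite connected weighted graph. If a complete voltage assignment v extends v₀ and satisfies the max-min gradient averaging property — for every non-terminal x, max over neighbors y of grad[v](x,y) equals minus the min over neighbors y of grad[v](x,y) — then v is the unique lex-minimizer of (G, v₀). -/

import Mathlib

/-- Total length of a walk in a graph with edge lengths `ℓ`. -/
noncomputable def walkLen {V : Type*} (ℓ : Sym2 V → ℝ) {G : SimpleGraph V} {u v : V}
    (p : G.Walk u v) : ℝ :=
  (p.darts.map fun d => ℓ d.edge).sum

/-- Shortest-path distance induced by edge lengths `ℓ`. -/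
noncomputable def gdist {V : Type*} (G : SimpleGraph V) (ℓ : Sym2 V → ℝ) (u v : V) : ℝ :=
  sInf {x | ∃ p : G.Walk u v, walkLen ℓ p = x}

/-- Absolute gradient `|v x - v y| / ℓ(x,y)` of `v` on the unordered pair `e`. -/
noncomputable def absGrad {V : Type*} (ℓ : Sym2 V → ℝ) (v : V → ℝ) (e : Sym2 V) : ℝ :=
  Sym2.lift ⟨fun x y => |v x - v y|, fun x y => abs_sub_comm (v x) (v y)⟩ e / ℓ e

/-- The absolute edge gradients of `v`, sorted in decreasing order. -/
noncomputable def gradList {V : Type*} [Fintype V] [DecidableEq V] (G : SimpleGraph V)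
    [DecidableRel G.Adj] (ℓ : Sym2 V → ℝ) (v : V → ℝ) : List ℝ :=
  (G.edgeFinset.val.map (absGrad ℓ v)).sort (· ≥ ·)

open SimpleGraph

/-- Sum of nonneg reals in a list is zero implies all zero. -/
lemma list_sum_zero {L : List ℝ} (h : ∀ x ∈ L, 0 ≤ x) (hs : L.sum = 0) : ∀ x ∈ L, x = 0 := by
  induction L with
  | nil => simp
  | cons a L ih =>
    have ha : 0 ≤ a := h a (by simp)
    have hL : 0 ≤ L.sum := List.sum_nonneg (fun x hx => h x (by simp [hx]))
    have hsum : a + L.sum = 0 := by simpa using hs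
    have ha0 : a = 0 := by linarith
    have hL0 : L.sum = 0 := by linarith
    intro x hx
    rcases List.mem_cons.1 hx with rfl | hx
    · exact ha0
    · exact ih (fun x hx => h x (by simp [hx])) hL0 x hx

/-- Telescoping sum of differences along a walk. -/
lemma walk_telescope {V : Type*} {G : SimpleGraph V} (u : V → ℝ) : ∀ {a b : V} (p : G.Walk a b),
    (p.darts.map fun d => u d.toProd.1 - u d.toProd.2).sum = u a - u b := by
  intro a b p
  induction p with
  | nil => simp
  | cons h p ih => simp [Walk.darts_cons, ih]

/-- Propagate equality along a walk with equal differences. -/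
lemma walk_prop_eq {V : Type*} {G : SimpleGraph V} (v w : V → ℝ) : ∀ {a b : V} (p : G.Walk a b),
    w a = v a → (∀ d ∈ p.darts, w d.toProd.1 - w d.toProd.2 = v d.toProd.1 - v d.toProd.2) →
    ∀ x ∈ p.support, w x = v x := by
  intro a b p
  induction p with
  | nil => intro h0 _ x hx; simp at hx; subst hx; exact h0
  | @cons a c b h p ih =>
    intro h0 hd x hx
    have hdc : w a - w c = v a - v c := hd ⟨(a, c), h⟩ (by simp [Walk.darts_cons])
    have hc : w c = v c := by linarith
    rcases List.mem_cons.1 (by simpa [Walk.support_cons] using hx) with rfl | hx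
    · exact h0
    · exact ih hc (fun d hdm => hd d (by simp [Walk.darts_cons, hdm])) x hx

noncomputable def sortD (m : Multiset ℝ) : List ℝ := m.sort (· ≥ ·)

lemma sortD_sorted (m : Multiset ℝ) : List.Pairwise (· ≥ ·) (sortD m) :=
  Multiset.pairwise_sort m _

lemma sortD_coe (m : Multiset ℝ) : (↑(sortD m) : Multiset ℝ) = m := Multiset.sort_eq m _

lemma mem_sortD {a : ℝ} {m : Multiset ℝ} : a ∈ sortD m ↔ a ∈ m := Multiset.mem_sort _

lemma sorted_replicate_append {k : ℕ} {M : ℝ} {L : List ℝ}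
    (hL : List.Pairwise (· ≥ ·) L) (hb : ∀ b ∈ L, b ≤ M) :
    List.Pairwise (· ≥ ·) (List.replicate k M ++ L) := by
  induction k with
  | zero => simpa using hL
  | succ k ih =>
    rw [List.replicate_succ, List.cons_append]
    refine List.pairwise_cons.2 ⟨?_, ih⟩
    intro b hbmem
    rcases List.mem_append.1 hbmem with h | h
    · rw [List.eq_of_mem_replicate h]
    · exact hb b h

lemma sortD_split (k : ℕ) (M : ℝ) (m : Multiset ℝ) (hm : ∀ a ∈ m, a ≤ M) :
    sortD (Multiset.replicate k M + m) = List.replicate k M ++ sortD m := by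
  refine List.Perm.eq_of_pairwise' (r := (· ≥ ·)) (sortD_sorted _) ?_ ?_
  swap
  · rw [← Multiset.coe_eq_coe]
    rw [← Multiset.coe_add, sortD_coe, sortD_coe, Multiset.coe_replicate]
  · exact sorted_replicate_append (sortD_sorted m) (fun b hb => hm b (mem_sortD.1 hb))

lemma lex_append {r : ℝ → ℝ → Prop} (A : List ℝ) {L L' : List ℝ} (h : List.Lex r L L') :
    List.Lex r (A ++ L) (A ++ L') := by
  induction A with
  | nil => exact h
  | cons a A ih => exact List.Lex.cons ih

lemma lex_of_head {m m' : Multiset ℝ} (c : ℝ) (h : ∀ a ∈ m, a < c) (hc : c ∈ m') :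
    List.Lex (· < ·) (sortD m) (sortD m') := by
  have hc' : c ∈ sortD m' := mem_sortD.2 hc
  obtain ⟨b, t, hbt⟩ := List.exists_cons_of_ne_nil (l := sortD m') (by intro h'; rw [h'] at hc'; simp at hc')
  rw [hbt]
  have hcb : c ≤ b := by
    have := sortD_sorted m'
    rw [hbt] at this
    rcases List.mem_cons.1 (hbt ▸ hc') with rfl | hmem
    · exact le_refl _
    · exact List.rel_of_pairwise_cons this hmem
  cases hsm : sortD m with
  | nil => exact List.Lex.nil
  | cons a t' =>
    have ha : a ∈ m := mem_sortD.1 (hsm ▸ List.mem_cons_self (a := a) (l := t'))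
    exact List.Lex.rel (lt_of_lt_of_le (h a ha) hcb)
open SimpleGraph

section
variable {V : Type*} [Fintype V] (G : SimpleGraph V) (ℓ : Sym2 V → ℝ) (v : V → ℝ) (x : V)

lemma gradSet_finite :
    {g : ℝ | ∃ y ∈ G.neighborSet x, g = (v x - v y) / ℓ s(x, y)}.Finite := by
  have : {g : ℝ | ∃ y ∈ G.neighborSet x, g = (v x - v y) / ℓ s(x, y)} =
      (fun y => (v x - v y) / ℓ s(x, y)) '' (G.neighborSet x) := by
    ext g; simp [Set.mem_image, eq_comm]
  rw [this]
  exact (Set.toFinite _).image _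

lemma exists_opp (M : ℝ)
    (hmm : sSup {g : ℝ | ∃ y ∈ G.neighborSet x, g = (v x - v y) / ℓ s(x, y)} =
        - sInf {g : ℝ | ∃ y ∈ G.neighborSet x, g = (v x - v y) / ℓ s(x, y)})
    (hbd : ∀ y, G.Adj x y → |v x - v y| / ℓ s(x,y) ≤ M)
    (hpos : ∀ y, G.Adj x y → 0 < ℓ s(x,y))
    (y₀ : V) (hy₀ : G.Adj x y₀) (c : ℝ) (hc : c = M ∨ c = -M)
    (hgrad : (v x - v y₀) / ℓ s(x,y₀) = c) :
    ∃ z, G.Adj x z ∧ (v x - v z) / ℓ s(x,z) = -c := by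
  set S := {g : ℝ | ∃ y ∈ G.neighborSet x, g = (v x - v y) / ℓ s(x, y)} with hS
  have hfin : S.Finite := gradSet_finite G ℓ v x
  have hne : S.Nonempty := ⟨c, y₀, hy₀, hgrad.symm⟩
  have hub : ∀ g ∈ S, g ≤ M := by
    rintro g ⟨y, hy, rfl⟩
    calc (v x - v y) / ℓ s(x,y) ≤ |v x - v y| / ℓ s(x,y) :=
          (div_le_div_iff_of_pos_right (hpos y hy)).2 (le_abs_self _)
      _ ≤ M := hbd y hy
  have hlb : ∀ g ∈ S, -M ≤ g := by
    rintro g ⟨y, hy, rfl⟩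
    have h1 : -(|v x - v y| / ℓ s(x,y)) ≤ (v x - v y) / ℓ s(x,y) := by
      rw [← neg_div]
      exact (div_le_div_iff_of_pos_right (hpos y hy)).2 (neg_abs_le _)
    have := hbd y hy
    linarith
  have hsup_le : sSup S ≤ M := csSup_le hne hub
  have hle_inf : -M ≤ sInf S := le_csInf hne hlb
  have hmem : c ∈ S := ⟨y₀, hy₀, hgrad.symm⟩
  rcases hc with hc | hc
  · have hsup : sSup S = M := le_antisymm hsup_le (hc ▸ le_csSup hfin.bddAbove hmem)
    have hinf : sInf S = -M := by rw [hsup] at hmm; linarith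
    have hmem2 := hne.csInf_mem hfin
    rw [hinf] at hmem2
    obtain ⟨z, hz, hzg⟩ := hmem2
    exact ⟨z, hz, by rw [← hzg, hc]⟩
  · have hinf : sInf S = -M := le_antisymm (hc ▸ csInf_le hfin.bddBelow hmem) hle_inf
    have hsup : sSup S = M := by rw [hinf] at hmm; linarith
    have hmem2 := hne.csSup_mem hfin
    rw [hsup] at hmem2
    obtain ⟨z, hz, hzg⟩ := hmem2
    refine ⟨z, hz, by rw [← hzg, hc]; ring⟩
end
open SimpleGraph

/-- From a vertex with a steep down-edge, ascend with gradient `M` until reaching a terminal. -/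
lemma ascend {V : Type*} [Fintype V] [DecidableEq V] {G : SimpleGraph V}
    (ℓ : Sym2 V → ℝ) (u : V → ℝ) (T : Set V) (E : Finset (Sym2 V)) (M : ℝ)
    (hℓE : ∀ e ∈ E, 0 < ℓ e) (hM : 0 < M)
    (H : ∀ x, x ∉ T → (∃ y, G.Adj x y ∧ u x - u y = M * ℓ s(x,y)) →
          ∃ z, G.Adj z x ∧ u z - u x = M * ℓ s(z,x) ∧ s(z,x) ∈ E) :
    ∀ x, (∃ y, G.Adj x y ∧ u x - u y = M * ℓ s(x,y)) →
      ∃ (t : V) (p : G.Walk t x), t ∈ T ∧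
        ∀ d ∈ p.darts, u d.toProd.1 - u d.toProd.2 = M * ℓ d.edge ∧ d.edge ∈ E := by
  have main : ∀ n : ℕ, ∀ x : V, (Finset.univ.filter (fun z => u x < u z)).card ≤ n →
      (∃ y, G.Adj x y ∧ u x - u y = M * ℓ s(x,y)) →
      ∃ (t : V) (p : G.Walk t x), t ∈ T ∧
        ∀ d ∈ p.darts, u d.toProd.1 - u d.toProd.2 = M * ℓ d.edge ∧ d.edge ∈ E := by
    intro n
    induction n with
    | zero =>
      intro x hcard hprem
      by_cases hxT : x ∈ T
      · exact ⟨x, Walk.nil, hxT, by simp⟩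
      · obtain ⟨z, hadj, hgz, hE⟩ := H x hxT hprem
        have hlt : u x < u z := by
          have := hℓE _ hE
          nlinarith
        have : z ∈ Finset.univ.filter (fun z => u x < u z) := by simp [hlt]
        have := Finset.card_pos.2 ⟨z, this⟩
        omega
    | succ n ih =>
      intro x hcard hprem
      by_cases hxT : x ∈ T
      · exact ⟨x, Walk.nil, hxT, by simp⟩
      · obtain ⟨z, hadj, hgz, hE⟩ := H x hxT hprem
        have hlt : u x < u z := by
          have := hℓE _ hE
          nlinarith
        have hss : Finset.univ.filter (fun y => u z < u y) ⊂ Finset.univ.filter (fun y => u x < u y) := by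
          refine Finset.ssubset_iff_of_subset ?_ |>.2 ⟨z, by simp [hlt], by simp⟩
          intro a ha
          simp only [Finset.mem_filter, Finset.mem_univ, true_and] at ha ⊢
          linarith
        have hcard' : (Finset.univ.filter (fun y => u z < u y)).card ≤ n := by
          have := Finset.card_lt_card hss
          omega
        have hprem' : ∃ y, G.Adj z y ∧ u z - u y = M * ℓ s(z,y) := ⟨x, hadj, hgz⟩
        obtain ⟨t, p, htT, hdarts⟩ := ih z hcard' hprem'
        refine ⟨t, p.concat hadj, htT, ?_⟩
        intro d hd
        rw [Walk.darts_concat, List.concat_eq_append] at hd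
        rcases List.mem_append.1 hd with h | h
        · exact hdarts d h
        · have : d = ⟨(z, x), hadj⟩ := by simpa using h
          subst this
          refine ⟨hgz, hE⟩
  intro x hx
  exact main _ x le_rfl hx

/-- Truncate a walk from a non-terminal at the first terminal. -/
lemma first_terminal {V : Type*} {G : SimpleGraph V} (T : Set V) :
    ∀ {x t : V} (_ : G.Walk x t), t ∈ T → x ∉ T →
      ∃ t' ∈ T, ∃ q : G.Walk x t', ∀ d ∈ q.darts, d.toProd.1 ∉ T := by
  intro x t p
  induction p with
  | nil => intro ht hx; exact absurd ht hx
  | @cons a c b h p ih =>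
    intro ht hx
    by_cases hcT : c ∈ T
    · refine ⟨c, hcT, Walk.cons h Walk.nil, ?_⟩
      intro d hd
      have : d = ⟨(a, c), h⟩ := by simpa [Walk.darts_cons] using hd
      subst this
      exact hx
    · obtain ⟨t', ht', q, hq⟩ := ih ht hcT
      refine ⟨t', ht', Walk.cons h q, ?_⟩
      intro d hd
      rcases List.mem_cons.1 (by simpa [Walk.darts_cons] using hd) with rfl | hd'
      · exact hx
      · exact hq d hd'

lemma absGrad_mk {V : Type*} (ℓ : Sym2 V → ℝ) (v : V → ℝ) (x y : V) :
    absGrad ℓ v s(x,y) = |v x - v y| / ℓ s(x,y) := rfl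

lemma absGrad_nonneg {V : Type*} (ℓ : Sym2 V → ℝ) (v : V → ℝ) (e : Sym2 V) (he : 0 < ℓ e) :
    0 ≤ absGrad ℓ v e := by
  induction e using Sym2.ind with
  | _ a b => exact div_nonneg (abs_nonneg _) he.le

lemma absGrad_abs_eq {V : Type*} (ℓ : Sym2 V → ℝ) (v : V → ℝ) (x y : V) (h : 0 < ℓ s(x,y)) :
    |v x - v y| = absGrad ℓ v s(x,y) * ℓ s(x,y) := by
  rw [absGrad_mk, div_mul_cancel₀ _ h.ne']

lemma list_map_sub_sum {α : Type*} (l : List α) (f g : α → ℝ) :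
    (l.map fun x => f x - g x).sum = (l.map f).sum - (l.map g).sum := by
  induction l with
  | nil => simp
  | cons a l ih => simp [ih]; ring

/-- From `w ≠ v`, find a differing non-terminal and a walk to a terminal through non-terminals. -/
lemma diff_walk {V : Type*} {G : SimpleGraph V} (hG : G.Connected) (T : Set V)
    (hT : T.Nonempty) (v w : V → ℝ) (hwT : ∀ t ∈ T, w t = v t) (hne : w ≠ v) :
    ∃ (x t' : V) (q : G.Walk x t'), t' ∈ T ∧ w x ≠ v x ∧
      (∀ d ∈ q.darts, d.toProd.1 ∉ T) ∧ q.darts ≠ [] := by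
  obtain ⟨x, hx⟩ := Function.ne_iff.1 hne
  have hxT : x ∉ T := fun h => hx (hwT x h)
  obtain ⟨t₀, ht₀⟩ := hT
  obtain ⟨p⟩ := hG.preconnected x t₀
  obtain ⟨t', ht', q, hq⟩ := first_terminal T p ht₀ hxT
  refine ⟨x, t', q, ht', hx, hq, ?_⟩
  intro hnil
  have : q.length = 0 := by rw [← Walk.length_darts, hnil]; rfl
  exact hxT (Walk.eq_of_length_eq_zero this ▸ ht')

lemma key {V : Type*} [Fintype V] [DecidableEq V]
    (G : SimpleGraph V) [DecidableRel G.Adj] (hG : G.Connected)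
    (ℓ : Sym2 V → ℝ) (hℓ : ∀ e ∈ G.edgeSet, 0 < ℓ e)
    (v w : V → ℝ) :
    ∀ (n : ℕ) (E : Finset (Sym2 V)) (T : Set V), E.card ≤ n → ↑E ⊆ G.edgeSet → T.Nonempty →
      (∀ x, x ∉ T → ∀ y, G.Adj x y → s(x,y) ∈ E) →
      (∀ x : V, x ∉ T →
        sSup {g : ℝ | ∃ y ∈ G.neighborSet x, g = (v x - v y) / ℓ s(x, y)} =
          - sInf {g : ℝ | ∃ y ∈ G.neighborSet x, g = (v x - v y) / ℓ s(x, y)}) →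
      (∀ t ∈ T, w t = v t) → w ≠ v →
      List.Lex (· < ·) (sortD (E.val.map (absGrad ℓ v))) (sortD (E.val.map (absGrad ℓ w))) := by
  intro n
  induction n with
  | zero =>
    intro E T hcard hEsub hT hinv hmm hwT hne
    exfalso
    obtain ⟨x, t', q, ht', hx, hq, hqne⟩ := diff_walk hG T hT v w hwT hne
    obtain ⟨d, hd⟩ := List.exists_mem_of_ne_nil _ hqne
    have : d.edge ∈ E := hinv _ (hq d hd) _ d.adj
    have := Finset.card_pos.2 ⟨d.edge, this⟩
    omega
  | succ n ih =>
    intro E T hcard hEsub hT hinv hmm hwT hne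
    classical
    have hℓE : ∀ e ∈ E, 0 < ℓ e := fun e he => hℓ e (hEsub he)
    -- E is nonempty
    obtain ⟨x₀, t₀', q₀, ht₀', hx₀, hq₀, hq₀ne⟩ := diff_walk hG T hT v w hwT hne
    have hq₀E : ∀ d ∈ q₀.darts, d.edge ∈ E := fun d hd => hinv _ (hq₀ d hd) _ d.adj
    obtain ⟨d₀, hd₀⟩ := List.exists_mem_of_ne_nil _ hq₀ne
    have hEne : (E : Finset (Sym2 V)).Nonempty := ⟨d₀.edge, hq₀E d₀ hd₀⟩
    -- maximum gradient M
    obtain ⟨emax, hemax, hmax⟩ := Finset.exists_max_image E (absGrad ℓ v) hEne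
    set M := absGrad ℓ v emax with hMdef
    have hM0 : 0 ≤ M := absGrad_nonneg ℓ v emax (hℓE _ hemax)
    -- case: w has a gradient exceeding M
    by_cases hcase : ∃ e ∈ E, M < absGrad ℓ w e
    · obtain ⟨e₀, he₀, he₀M⟩ := hcase
      refine lex_of_head (absGrad ℓ w e₀) ?_ ?_
      · intro a ha
        obtain ⟨e', he', rfl⟩ := Multiset.mem_map.1 ha
        exact lt_of_le_of_lt (hmax e' he') he₀M
      · exact Multiset.mem_map.2 ⟨e₀, he₀, rfl⟩
    push_neg at hcase
    -- M must be positive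
    have hMpos : 0 < M := by
      rcases lt_or_eq_of_le hM0 with h | h
      · exact h
      · exfalso
        have hdiff0 : ∀ (u : V → ℝ), (∀ e ∈ E, absGrad ℓ u e ≤ M) → u x₀ = u t₀' := by
          intro u hu
          have hz : ∀ d ∈ q₀.darts, u d.toProd.1 - u d.toProd.2 = 0 := by
            intro d hd
            have hdE := hq₀E d hd
            have hpos := hℓE _ hdE
            have h1 : absGrad ℓ u d.edge = 0 := by
              refine le_antisymm ?_ (absGrad_nonneg ℓ u _ hpos)
              rw [h]; exact hu _ hdE
            have h2 : |u d.toProd.1 - u d.toProd.2| = absGrad ℓ u d.edge * ℓ d.edge :=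
              absGrad_abs_eq ℓ u _ _ hpos
            rw [h1, zero_mul] at h2
            exact abs_eq_zero.1 h2
          have hsum : u x₀ - u t₀' = 0 := by
            rw [← walk_telescope u q₀]
            exact List.sum_eq_zero (by
              intro x hx
              obtain ⟨d, hd, rfl⟩ := List.mem_map.1 hx
              exact hz d hd)
          linarith
        have hv0 : v x₀ = v t₀' := hdiff0 v (fun e he => hmax e he)
        have hw0 : w x₀ = w t₀' := hdiff0 w hcase
        exact hx₀ (by rw [hw0, hwT _ ht₀', ← hv0])
    -- gradient bounds at non-terminals
    have hbd_all : ∀ x, x ∉ T → ∀ y, G.Adj x y → |v x - v y| / ℓ s(x,y) ≤ M := by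
      intro x hxT y hadj
      have hE : s(x,y) ∈ E := hinv x hxT y hadj
      have := hmax _ hE
      rwa [absGrad_mk] at this
    have hpos_adj : ∀ (x y : V), G.Adj x y → 0 < ℓ s(x,y) :=
      fun x y hxy => hℓ _ (G.mem_edgeSet.2 hxy)
    have H_up : ∀ x, x ∉ T → (∃ y, G.Adj x y ∧ v x - v y = M * ℓ s(x,y)) →
        ∃ z, G.Adj z x ∧ v z - v x = M * ℓ s(z,x) ∧ s(z,x) ∈ E := by
      rintro x hxT ⟨y, hadj, hxy⟩
      have hposy := hpos_adj x y hadj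
      have hgrad : (v x - v y) / ℓ s(x,y) = M := by rw [hxy]; field_simp
      obtain ⟨z, hz, hzg⟩ := exists_opp G ℓ v x M (hmm x hxT) (hbd_all x hxT)
        (fun y' h => hpos_adj x y' h) y hadj M (Or.inl rfl) hgrad
      have hposz := hpos_adj x z hz
      have hxz : v x - v z = -M * ℓ s(x,z) := by
        have := (div_eq_iff hposz.ne').1 hzg
        linarith
      refine ⟨z, hz.symm, ?_, ?_⟩
      · rw [show s(z,x) = s(x,z) from Sym2.eq_swap]
        linarith
      · rw [show s(z,x) = s(x,z) from Sym2.eq_swap]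
        exact hinv x hxT z hz
    have H_down : ∀ x, x ∉ T →
        (∃ y, G.Adj x y ∧ (fun z => -v z) x - (fun z => -v z) y = M * ℓ s(x,y)) →
        ∃ z, G.Adj z x ∧ (fun z' => -v z') z - (fun z' => -v z') x = M * ℓ s(z,x) ∧ s(z,x) ∈ E := by
      rintro x hxT ⟨y, hadj, hxy⟩
      simp only at hxy
      have hposy := hpos_adj x y hadj
      have hgrad : (v x - v y) / ℓ s(x,y) = -M := by
        rw [div_eq_iff hposy.ne']
        linarith
      obtain ⟨z, hz, hzg⟩ := exists_opp G ℓ v x M (hmm x hxT) (hbd_all x hxT)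
        (fun y' h => hpos_adj x y' h) y hadj (-M) (Or.inr rfl) hgrad
      have hposz := hpos_adj x z hz
      have hxz : v x - v z = M * ℓ s(x,z) := by
        have := (div_eq_iff hposz.ne').1 hzg
        linarith
      refine ⟨z, hz.symm, ?_, ?_⟩
      · simp only
        rw [show s(z,x) = s(x,z) from Sym2.eq_swap]
        linarith
      · rw [show s(z,x) = s(x,z) from Sym2.eq_swap]
        exact hinv x hxT z hz
    -- the forcing lemma for oriented max-gradient edges
    have hforce : ∀ a b : V, G.Adj a b → s(a,b) ∈ E → v a - v b = M * ℓ s(a,b) →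
        w a = v a ∧ w b = v b := by
      intro a b hadj hEab hvab
      obtain ⟨t₁, p₁, ht₁, hp₁⟩ := ascend ℓ v T E M hℓE hMpos H_up a ⟨b, hadj, hvab⟩
      have hdownprem : ∃ y, G.Adj b y ∧ (fun z => -v z) b - (fun z => -v z) y = M * ℓ s(b,y) := by
        refine ⟨a, hadj.symm, ?_⟩
        simp only
        rw [show s(b,a) = s(a,b) from Sym2.eq_swap]
        linarith
      obtain ⟨t₂, p₂, ht₂, hp₂⟩ := ascend ℓ (fun z => -v z) T E M hℓE hMpos H_down b hdownprem
      set Q : G.Walk t₁ t₂ := p₁.append (Walk.cons hadj p₂.reverse) with hQ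
      have hQdarts : ∀ d ∈ Q.darts, (v d.toProd.1 - v d.toProd.2 = M * ℓ d.edge) ∧ d.edge ∈ E := by
        intro d hd
        rw [hQ, Walk.darts_append, Walk.darts_cons] at hd
        rcases List.mem_append.1 hd with h | h
        · exact hp₁ d h
        rcases List.mem_cons.1 h with rfl | h
        · exact ⟨hvab, hEab⟩
        · rw [Walk.darts_reverse, List.mem_reverse] at h
          obtain ⟨d₀, hd₀, rfl⟩ := List.mem_map.1 h
          obtain ⟨hg0, hE'⟩ := hp₂ d₀ hd₀
          have hg : -v d₀.toProd.1 - -v d₀.toProd.2 = M * ℓ d₀.edge := hg0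
          have he1 : d₀.symm.edge = d₀.edge := Dart.edge_symm d₀
          have he2 : d₀.symm.toProd.1 = d₀.toProd.2 := rfl
          have he3 : d₀.symm.toProd.2 = d₀.toProd.1 := rfl
          refine ⟨?_, by rwa [he1]⟩
          rw [he1, he2, he3]
          linarith
      have hvsum : v t₁ - v t₂ = (Q.darts.map fun d => M * ℓ d.edge).sum := by
        rw [← walk_telescope v Q]
        exact congrArg List.sum (List.map_congr_left (fun d hd => (hQdarts d hd).1))
      have hwsum : (Q.darts.map fun d => w d.toProd.1 - w d.toProd.2).sum = v t₁ - v t₂ := by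
        rw [walk_telescope w Q, hwT _ ht₁, hwT _ ht₂]
      have hslack0 : (Q.darts.map fun d => M * ℓ d.edge - (w d.toProd.1 - w d.toProd.2)).sum = 0 := by
        rw [list_map_sub_sum, hwsum, ← hvsum]
        ring
      have hslack_nonneg : ∀ x ∈ Q.darts.map fun d => M * ℓ d.edge - (w d.toProd.1 - w d.toProd.2), 0 ≤ x := by
        intro x hx
        obtain ⟨d, hd, rfl⟩ := List.mem_map.1 hx
        have hdE := (hQdarts d hd).2
        have hpos := hℓE _ hdE
        have hb1 : w d.toProd.1 - w d.toProd.2 ≤ |w d.toProd.1 - w d.toProd.2| := le_abs_self _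
        have hb2 : |w d.toProd.1 - w d.toProd.2| = absGrad ℓ w d.edge * ℓ d.edge :=
          absGrad_abs_eq ℓ w _ _ hpos
        have hb3 : absGrad ℓ w d.edge * ℓ d.edge ≤ M * ℓ d.edge :=
          mul_le_mul_of_nonneg_right (hcase _ hdE) hpos.le
        linarith
      have hterm : ∀ d ∈ Q.darts, w d.toProd.1 - w d.toProd.2 = v d.toProd.1 - v d.toProd.2 := by
        intro d hd
        have h0 := list_sum_zero hslack_nonneg hslack0 _ (List.mem_map.2 ⟨d, hd, rfl⟩)
        have := (hQdarts d hd).1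
        linarith
      have hall : ∀ x ∈ Q.support, w x = v x :=
        walk_prop_eq v w Q (hwT _ ht₁) hterm
      constructor
      · refine hall a ?_
        rw [hQ, Walk.mem_support_append_iff]
        exact Or.inl p₁.end_mem_support
      · refine hall b ?_
        rw [hQ, Walk.mem_support_append_iff]
        refine Or.inr ?_
        rw [Walk.support_cons]
        exact List.mem_cons.2 (Or.inr p₂.reverse.start_mem_support)
    -- forcing on unordered edges
    have hforceE : ∀ e : Sym2 V, absGrad ℓ v e = M → e ∈ E → ∀ x ∈ e, w x = v x := by
      intro e
      induction e using Sym2.ind with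
      | _ a b =>
        intro heM heE x hx
        have hadj : G.Adj a b := G.mem_edgeSet.1 (hEsub heE)
        have hpos := hℓE _ heE
        have habs : |v a - v b| = M * ℓ s(a,b) := by
          rw [absGrad_abs_eq ℓ v a b hpos, heM]
        rcases abs_cases (v a - v b) with ⟨h1, _⟩ | ⟨h1, _⟩
        · obtain ⟨ha, hb⟩ := hforce a b hadj heE (by linarith)
          rcases Sym2.mem_iff.1 hx with rfl | rfl
          · exact ha
          · exact hb
        · have hswap : s(b,a) = s(a,b) := Sym2.eq_swap
          obtain ⟨hb, ha⟩ := hforce b a hadj.symm (hswap ▸ heE) (by rw [hswap]; linarith)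
          rcases Sym2.mem_iff.1 hx with rfl | rfl
          · exact ha
          · exact hb
    -- split off the maximum-gradient edges
    set K : Finset (Sym2 V) := E.filter (fun e => absGrad ℓ v e = M) with hK
    have hemaxK : emax ∈ K := Finset.mem_filter.2 ⟨hemax, rfl⟩
    set E' : Finset (Sym2 V) := E.filter (fun e => ¬ absGrad ℓ v e = M) with hE'
    have hsplitval : K.val + E'.val = E.val := by
      rw [hK, hE', Finset.filter_val, Finset.filter_val]
      exact Multiset.filter_add_not _ E.val
    have hgrad_eq : ∀ e : Sym2 V, (∀ x ∈ e, w x = v x) → absGrad ℓ w e = absGrad ℓ v e := by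
      intro e
      induction e using Sym2.ind with
      | _ a b =>
        intro hxy
        rw [absGrad_mk, absGrad_mk, hxy a (Sym2.mem_mk_left a b), hxy b (Sym2.mem_mk_right a b)]
    have hwgradK : ∀ e ∈ K, absGrad ℓ w e = M := by
      intro e heK
      obtain ⟨heE, heM⟩ := Finset.mem_filter.1 heK
      exact (hgrad_eq e (hforceE e heM heE)).trans heM
    have hKv : K.val.map (absGrad ℓ v) = Multiset.replicate K.card M := by
      rw [Multiset.eq_replicate]
      constructor
      · rw [Multiset.card_map]; rfl
      · intro b hb
        obtain ⟨e, he, rfl⟩ := Multiset.mem_map.1 hb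
        exact (Finset.mem_filter.1 he).2
    have hKw : K.val.map (absGrad ℓ w) = Multiset.replicate K.card M := by
      rw [Multiset.eq_replicate]
      constructor
      · rw [Multiset.card_map]; rfl
      · intro b hb
        obtain ⟨e, he, rfl⟩ := Multiset.mem_map.1 hb
        exact hwgradK e he
    have hE'sub : ∀ e ∈ E'.val, e ∈ E := fun e he => Finset.filter_subset _ _ he
    have hvbound : ∀ a ∈ E'.val.map (absGrad ℓ v), a ≤ M := by
      intro a ha
      obtain ⟨e, he, rfl⟩ := Multiset.mem_map.1 ha
      exact hmax e (hE'sub e he)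
    have hwbound : ∀ a ∈ E'.val.map (absGrad ℓ w), a ≤ M := by
      intro a ha
      obtain ⟨e, he, rfl⟩ := Multiset.mem_map.1 ha
      exact hcase e (hE'sub e he)
    have hvlist : sortD (E.val.map (absGrad ℓ v)) =
        List.replicate K.card M ++ sortD (E'.val.map (absGrad ℓ v)) := by
      rw [← hsplitval, Multiset.map_add, hKv]
      exact sortD_split _ _ _ hvbound
    have hwlist : sortD (E.val.map (absGrad ℓ w)) =
        List.replicate K.card M ++ sortD (E'.val.map (absGrad ℓ w)) := by
      rw [← hsplitval, Multiset.map_add, hKw]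
      exact sortD_split _ _ _ hwbound
    rw [hvlist, hwlist]
    apply lex_append
    -- recurse on the remaining edges with enlarged terminal set
    set T' : Set V := T ∪ {x | ∃ e ∈ K, x ∈ e} with hT'
    have hcard' : E'.card ≤ n := by
      have hsum := Finset.card_filter_add_card_filter_not
        (s := E) (p := fun e => absGrad ℓ v e = M)
      have hKpos : 0 < K.card := Finset.card_pos.2 ⟨emax, hemaxK⟩
      rw [← hK, ← hE'] at hsum
      omega
    refine ih E' T' hcard' ?_ ?_ ?_ ?_ ?_ hne
    · intro e he
      exact hEsub (Finset.mem_coe.2 (Finset.filter_subset _ _ (Finset.mem_coe.1 he)))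
    · obtain ⟨t₀, ht₀⟩ := hT
      exact ⟨t₀, Or.inl ht₀⟩
    · intro x hxT' y hadj
      have hxT : x ∉ T := fun h => hxT' (Or.inl h)
      have hbase : s(x,y) ∈ E := hinv x hxT y hadj
      refine Finset.mem_filter.2 ⟨hbase, ?_⟩
      intro hpe
      exact hxT' (Or.inr ⟨s(x,y), Finset.mem_filter.2 ⟨hbase, hpe⟩, Sym2.mem_mk_left x y⟩)
    · exact fun x hx => hmm x (fun h => hx (Or.inl h))
    · intro t ht
      rcases ht with ht | ⟨e, heK, hte⟩
      · exact hwT t ht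
      · obtain ⟨heE, heM⟩ := Finset.mem_filter.1 heK
        exact hforceE e heM heE t hte

/-- If an extension `v` of `v₀` satisfies the max-min gradient averaging property
at every non-terminal, then `v` is the unique lex-minimizer of `(G, v₀)`. -/
theorem maxmin_averaging_implies_lex_min {V : Type*} [Fintype V] [DecidableEq V]
    (G : SimpleGraph V) [DecidableRel G.Adj] (hG : G.Connected)
    (ℓ : Sym2 V → ℝ) (hℓ : ∀ e ∈ G.edgeSet, 0 < ℓ e)
    (T : Set V) (hT : T.Nonempty) (v₀ : V → ℝ)
    (v : V → ℝ) (hext : ∀ t ∈ T, v t = v₀ t)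
    (hmaxmin : ∀ x : V, x ∉ T →
      sSup {g : ℝ | ∃ y ∈ G.neighborSet x, g = (v x - v y) / ℓ s(x, y)} =
        - sInf {g : ℝ | ∃ y ∈ G.neighborSet x, g = (v x - v y) / ℓ s(x, y)}) :
    ∀ w : V → ℝ, (∀ t ∈ T, w t = v₀ t) → w ≠ v →
      List.Lex (· < ·) (gradList G ℓ v) (gradList G ℓ w) := by
  intro w hw hne
  have hwv : ∀ t ∈ T, w t = v t := fun t ht => by rw [hw t ht, hext t ht]
  have hsub : ↑G.edgeFinset ⊆ G.edgeSet := by rw [G.coe_edgeFinset]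
  have hinv : ∀ x, x ∉ T → ∀ y, G.Adj x y → s(x,y) ∈ G.edgeFinset :=
    fun x _ y h => mem_edgeFinset.mpr (G.mem_edgeSet.mpr h)
  exact key G hG ℓ hℓ v w G.edgeFinset.card G.edgeFinset T le_rfl hsub hT hinv hmaxmin hwv hne
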